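/- If K ⊆ L ⊆ M are finite extensions of local fields with both M and L Galois over K, then VC(M/K) implies VC(L/K). -/

import Mathlib

/-- A local field structure on a field `K`: a normalized (surjective) discrete
valuation `v : K* ↠ ℤ`, extended by a junk value at `0`, with respect to which
`K` is complete. -/
structure LocalFieldStruct (K : Type) [Field K] where
  /-- the valuation; its value at `0` is irrelevant -/
  v : K → ℤ
  v_mul : ∀ x y : K, x ≠ 0 → y ≠ 0 → v (x * y) = v x + v y
  v_add : ∀ x y : K, x ≠ 0 → y ≠ 0 → x + y ≠ 0 → min (v x) (v y) ≤ v (x + y)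
  v_surj : ∀ n : ℤ, ∃ x : K, x ≠ 0 ∧ v x = n
  complete : ∀ a : ℕ → K,
      (∀ N : ℤ, ∃ M : ℕ, ∀ m : ℕ, M ≤ m → ∀ n : ℕ, M ≤ n →
        a m = a n ∨ N ≤ v (a m - a n)) →
      ∃ x : K, ∀ N : ℤ, ∃ M : ℕ, ∀ n : ℕ, M ≤ n → a n = x ∨ N ≤ v (a n - x)

namespace LocalFieldStruct

variable {K L : Type} [Field K] [Field L]

/-- `x` lies in the valuation ring `O_K`. -/
def Integral (w : LocalFieldStruct K) (x : K) : Prop :=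
  x = 0 ∨ 0 ≤ w.v x

/-- The residue characteristic of `K` is the prime `p`, i.e. `p` maps to `0`
in the residue field of the valuation ring. -/
def ResidueCharP (w : LocalFieldStruct K) (p : ℕ) : Prop :=
  p.Prime ∧ ((p : K) = 0 ∨ 0 < w.v (p : K))

/-- `K` has mixed characteristic `(0, p)`: `K` has characteristic `0` and its
residue field has characteristic `p > 0`. -/
def MixedChar (w : LocalFieldStruct K) (p : ℕ) : Prop :=
  CharZero K ∧ p.Prime ∧ 0 < w.v (p : K)

/-- `e` is the ramification index `e_{L/K}`: the valuation of `L` restricted to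
`K` is `e` times the valuation of `K`. -/
def IsRamificationIndex (wK : LocalFieldStruct K) (wL : LocalFieldStruct L)
    [Algebra K L] (e : ℕ) : Prop :=
  0 < e ∧ ∀ x : K, x ≠ 0 → wL.v (algebraMap K L x) = (e : ℤ) * wK.v x

/-- `d` is the valuation `d_{L/K}` of the different of `L/K`, characterized by
`Tr_{L/K}(𝔭_L^i) ⊆ O_K ↔ i ≥ -d` for all `i : ℤ`. -/
def IsDifferentVal (wK : LocalFieldStruct K) (wL : LocalFieldStruct L)
    [Algebra K L] (d : ℤ) : Prop :=
  ∀ i : ℤ,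
    (∀ x : L, (x ≠ 0 → i ≤ wL.v x) → wK.Integral (Algebra.trace K L x)) ↔ -d ≤ i

end LocalFieldStruct

namespace LocalFieldStruct

variable {F : Type} [Field F] (w : LocalFieldStruct F)

lemma v_one' : w.v 1 = 0 := by
  have := w.v_mul 1 1 one_ne_zero one_ne_zero
  simp at this; omega

lemma v_inv' {x : F} (hx : x ≠ 0) : w.v x⁻¹ = - w.v x := by
  have := w.v_mul x x⁻¹ hx (inv_ne_zero hx)
  rw [mul_inv_cancel₀ hx, w.v_one'] at this; omega

lemma v_neg' {x : F} (hx : x ≠ 0) : w.v (-x) = w.v x := by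
  have hm : w.v ((-1 : F) * (-1 : F)) = w.v (-1) + w.v (-1) :=
    w.v_mul _ _ (by norm_num) (by norm_num)
  rw [show ((-1 : F) * (-1 : F)) = 1 by ring, w.v_one'] at hm
  have := w.v_mul (-1) x (by norm_num) hx
  rw [show (-1 : F) * x = -x by ring] at this
  omega

lemma v_pow' {x : F} (hx : x ≠ 0) (n : ℕ) : w.v (x ^ n) = n * w.v x := by
  induction n with
  | zero => simpa using w.v_one'
  | succ k ih =>
    rw [pow_succ, w.v_mul _ _ (pow_ne_zero _ hx) hx, ih]
    push_cast; ring


/-- Cauchy sequence predicate matching `complete`. -/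
def Cau (a : ℕ → F) : Prop :=
  ∀ N : ℤ, ∃ M : ℕ, ∀ m : ℕ, M ≤ m → ∀ n : ℕ, M ≤ n →
    a m = a n ∨ N ≤ w.v (a m - a n)

/-- Limit predicate matching `complete`. -/
def Lim (a : ℕ → F) (x : F) : Prop :=
  ∀ N : ℤ, ∃ M : ℕ, ∀ n : ℕ, M ≤ n → a n = x ∨ N ≤ w.v (a n - x)

lemma add_cases {N : ℤ} {x y : F} (hx : x = 0 ∨ N ≤ w.v x) (hy : y = 0 ∨ N ≤ w.v y) :
    x + y = 0 ∨ N ≤ w.v (x + y) := by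
  rcases hx with rfl | hx
  · simpa using hy
  rcases hy with rfl | hy
  · simp only [add_zero]
    by_cases h0 : x = 0
    · exact Or.inl h0
    · exact Or.inr hx
  by_cases hxy : x + y = 0
  · exact Or.inl hxy
  by_cases h0x : x = 0
  · subst h0x; right; simpa using hy
  by_cases h0y : y = 0
  · subst h0y; right; simpa using hx
  right
  exact le_trans (le_min hx hy) (w.v_add x y h0x h0y hxy)

lemma sub_cases {N : ℤ} {x y : F} (hx : x = 0 ∨ N ≤ w.v x) (hy : y = 0 ∨ N ≤ w.v y) :
    x - y = 0 ∨ N ≤ w.v (x - y) := by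
  rw [sub_eq_add_neg]
  refine w.add_cases hx ?_
  rcases hy with rfl | hy
  · simp
  by_cases h0 : y = 0
  · simp [h0]
  · right; rw [w.v_neg' h0]; exact hy

lemma sum_cases {ι : Type*} {N : ℤ} (s : Finset ι) (t : ι → F)
    (h : ∀ i ∈ s, t i = 0 ∨ N ≤ w.v (t i)) :
    (∑ i ∈ s, t i) = 0 ∨ N ≤ w.v (∑ i ∈ s, t i) := by
  classical
  induction s using Finset.induction_on with
  | empty => simp
  | insert _ _ hni ih =>
    rename_i a s'
    rw [Finset.sum_insert hni]
    exact w.add_cases (h a (Finset.mem_insert_self a s'))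
      (ih fun i hi => h i (Finset.mem_insert_of_mem hi))

lemma lim_unique {a : ℕ → F} {x y : F} (hx : w.Lim a x) (hy : w.Lim a y) : x = y := by
  by_contra hne
  set V := w.v (x - y) with hV
  obtain ⟨M1, h1⟩ := hx (V + 1)
  obtain ⟨M2, h2⟩ := hy (V + 1)
  set n := max M1 M2
  have hxy : x - y = (a n - y) - (a n - x) := by ring
  have c1 := h1 n (le_max_left _ _)
  have c2 := h2 n (le_max_right _ _)
  have key : x - y = 0 ∨ V + 1 ≤ w.v (x - y) := by
    rw [hxy]
    refine w.sub_cases ?_ ?_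
    · rcases c2 with h | h
      · left; rw [h]; ring
      · right; exact h
    · rcases c1 with h | h
      · left; rw [h]; ring
      · right; exact h
  rcases key with h | h
  · exact hne (by rw [sub_eq_zero] at h; exact h)
  · omega

section Tower

variable {K L : Type} [Field K] [Field L] [Algebra K L]
variable (wK : LocalFieldStruct K) (wL : LocalFieldStruct L)

lemma algebraMap_ne_zero' {c : K} (hc : c ≠ 0) : algebraMap K L c ≠ 0 := by
  intro h
  exact hc ((algebraMap K L).injective (by simpa using h))

lemma v_smul {e : ℕ} (he : wK.IsRamificationIndex wL e) {c : K} {x : L}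
    (hc : c ≠ 0) (hx : x ≠ 0) :
    wL.v (c • x) = (e : ℤ) * wK.v c + wL.v x := by
  rw [Algebra.smul_def, wL.v_mul _ _ (algebraMap_ne_zero' hc) hx, he.2 c hc]

theorem hard_lemma {e : ℕ} (he : wK.IsRamificationIndex wL e) (k : ℕ) :
    ∀ b : Fin k → L, LinearIndependent K b →
    ∃ C : ℤ,
      (∀ c : Fin k → K, ∀ j, c j ≠ 0 →
        wL.v (∑ i, c i • b i) ≤ (e : ℤ) * wK.v (c j) + C) ∧
      (∀ a : ℕ → Fin k → K, wL.Cau (fun n => ∑ i, a n i • b i) →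
        ∃ c : Fin k → K, wL.Lim (fun n => ∑ i, a n i • b i) (∑ i, c i • b i)) := by
  induction k with
  | zero =>
    intro b _
    refine ⟨0, fun c j => j.elim0, fun a _ => ⟨fun j => j.elim0, ?_⟩⟩
    intro N
    exact ⟨0, fun n _ => Or.inl rfl⟩
  | succ k ih =>
    intro b hb
    obtain ⟨htail, h0⟩ := linearIndependent_fin_succ.mp hb
    obtain ⟨C', hC'1, hC'2⟩ := ih (Fin.tail b) htail
    have hb0ne : b 0 ≠ 0 := by
      intro h
      exact h0 (h ▸ Submodule.zero_mem _)
    have hmem : ∀ c : Fin k → K, (∑ i, c i • Fin.tail b i) ∈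
        Submodule.span K (Set.range (Fin.tail b)) := fun c =>
      Submodule.sum_mem _ fun i _ => Submodule.smul_mem _ _ (Submodule.subset_span ⟨i, rfl⟩)
    have hbS : ∀ c : Fin k → K, b 0 - ∑ i, c i • Fin.tail b i ≠ 0 := by
      intro c h
      rw [sub_eq_zero] at h
      exact h0 (h ▸ hmem c)
    -- Step A: the distance from b 0 to the span of the tail is bounded
    have stepA : ∃ n₀ : ℤ, ∀ c : Fin k → K,
        wL.v (b 0 - ∑ i, c i • Fin.tail b i) < n₀ := by
      by_contra hA
      push_neg at hA
      choose cs hcs using fun n : ℕ => hA n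
      set S : ℕ → L := fun n => ∑ i, cs n i • Fin.tail b i with hSdef
      have hSc : wL.Cau S := by
        intro N
        refine ⟨N.toNat, fun m hm n hn => ?_⟩
        have hmv : N ≤ wL.v (b 0 - S m) := le_trans (Int.toNat_le.mp hm) (hcs m)
        have hnv : N ≤ wL.v (b 0 - S n) := le_trans (Int.toNat_le.mp hn) (hcs n)
        have heq : (b 0 - S n) - (b 0 - S m) = S m - S n := by ring
        rcases wL.sub_cases (Or.inr hnv) (Or.inr hmv) with h | h
        · left
          rw [heq] at h
          exact sub_eq_zero.mp h
        · right
          rwa [heq] at h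
      obtain ⟨cinf, hcinf⟩ := hC'2 cs hSc
      set T := ∑ i, cinf i • Fin.tail b i with hTdef
      have hbT : b 0 = T := by
        by_contra hne
        have hbTne : b 0 - T ≠ 0 := sub_ne_zero.mpr hne
        set V := wL.v (b 0 - T) with hV
        obtain ⟨M1, h1⟩ := hcinf (V + 1)
        set n := max M1 (V + 1).toNat with hn
        have e1 : (V + 1) ≤ wL.v (b 0 - S n) := by
          refine le_trans ?_ (hcs n)
          have : (V + 1).toNat ≤ n := le_max_right _ _
          exact le_trans (Int.self_le_toNat _) (by exact_mod_cast this)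
        have key : b 0 - T = 0 ∨ V + 1 ≤ wL.v (b 0 - T) := by
          have heq2 : b 0 - T = (b 0 - S n) + (S n - T) := by ring
          rw [heq2]
          refine wL.add_cases (Or.inr e1) ?_
          rcases h1 n (le_max_left _ _) with h | h
          · left; rw [sub_eq_zero]; exact h
          · right; exact h
        rcases key with h | h
        · exact hbTne h
        · omega
      exact h0 (hbT ▸ hmem cinf)
    obtain ⟨n₀, hn₀⟩ := stepA
    have hsum : ∀ c : Fin (k + 1) → K,
        ∑ i, c i • b i = c 0 • b 0 + ∑ i, c i.succ • Fin.tail b i := by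
      intro c
      rw [Fin.sum_univ_succ]
      rfl
    have hnz : ∀ c : Fin (k + 1) → K, (∃ j, c j ≠ 0) → ∑ i, c i • b i ≠ 0 := by
      rintro c ⟨j, hj⟩ hzero
      exact hj (Fintype.linearIndependent_iff.mp hb c hzero j)
    have hnzt : ∀ c : Fin k → K, (∃ j, c j ≠ 0) → ∑ i, c i • Fin.tail b i ≠ 0 := by
      rintro c ⟨j, hj⟩ hzero
      exact hj (Fintype.linearIndependent_iff.mp htail c hzero j)
    set C : ℤ := max n₀ (C' + max 0 (n₀ - wL.v (b 0))) with hC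
    -- the key sub-estimate for the leading coefficient
    have hc0case : ∀ c : Fin (k + 1) → K, c 0 ≠ 0 →
        wL.v (∑ i, c i • b i) < (e : ℤ) * wK.v (c 0) + n₀ := by
      intro c hc0
      set c' : Fin k → K := fun i => -((c 0)⁻¹ * c i.succ) with hc'
      set W := ∑ i, c i.succ • Fin.tail b i with hW
      have hsum' : ∑ i, c' i • Fin.tail b i = -((c 0)⁻¹ • W) := by
        rw [hW, Finset.smul_sum, ← Finset.sum_neg_distrib]
        refine Finset.sum_congr rfl fun i _ => ?_
        rw [hc']
        rw [neg_smul, smul_smul]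
      have heq : ∑ i, c i • b i = c 0 • (b 0 - ∑ i, c' i • Fin.tail b i) := by
        rw [hsum', sub_neg_eq_add, smul_add, smul_smul, mul_inv_cancel₀ hc0, one_smul,
          hsum c, hW]
      rw [heq, v_smul wK wL he hc0 (hbS c')]
      linarith [hn₀ c']
    have parti : ∀ c : Fin (k + 1) → K, ∀ j, c j ≠ 0 →
        wL.v (∑ i, c i • b i) ≤ (e : ℤ) * wK.v (c j) + C := by
      intro c j hj
      by_cases hj0 : j = 0
      · subst hj0
        have hn0C : n₀ ≤ C := hC ▸ le_max_left _ _
        linarith [hc0case c hj]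
      · obtain ⟨i, rfl⟩ := Fin.eq_succ_of_ne_zero hj0
        set W := ∑ i, c i.succ • Fin.tail b i with hW
        have hWv : wL.v W ≤ (e : ℤ) * wK.v (c i.succ) + C' := hC'1 (fun i => c i.succ) i hj
        by_cases hc0 : c 0 = 0
        · have hxW : ∑ i, c i • b i = W := by
            rw [hsum c, hc0, zero_smul, zero_add, hW]
          rw [hxW]
          have hCC : C' ≤ C := by
            have h1 : C' + 0 ≤ C' + max 0 (n₀ - wL.v (b 0)) := by
              exact add_le_add_right (le_max_left _ _) _
            have h2 : C' + max 0 (n₀ - wL.v (b 0)) ≤ C := hC ▸ le_max_right _ _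
            linarith
          linarith
        · have hxne : ∑ i, c i • b i ≠ 0 := hnz c ⟨i.succ, hj⟩
          have hWne : W ≠ 0 := hnzt _ ⟨i, hj⟩
          have hcb : c 0 • b 0 ≠ 0 := smul_ne_zero hc0 hb0ne
          have hWx : W = (∑ i, c i • b i) - c 0 • b 0 := by
            rw [hsum c, add_sub_cancel_left, hW]
          have hvW : min (wL.v (∑ i, c i • b i)) (wL.v (c 0 • b 0)) ≤ wL.v W := by
            rw [hWx, sub_eq_add_neg]
            refine le_trans (le_min (min_le_left _ _) ?_)
              (wL.v_add _ _ hxne (neg_ne_zero.mpr hcb)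
                (by rw [← sub_eq_add_neg, ← hWx]; exact hWne))
            rw [wL.v_neg' hcb]
            exact min_le_right _ _
          have hvcb : wL.v (c 0 • b 0) = (e : ℤ) * wK.v (c 0) + wL.v (b 0) :=
            v_smul wK wL he hc0 hb0ne
          have hxbound := hc0case c hc0
          have hCC : C' + max 0 (n₀ - wL.v (b 0)) ≤ C := hC ▸ le_max_right _ _
          have hmx : n₀ - wL.v (b 0) ≤ max 0 (n₀ - wL.v (b 0)) := le_max_right _ _
          have hmx0 : (0 : ℤ) ≤ max 0 (n₀ - wL.v (b 0)) := le_max_left _ _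
          rcases le_total (wL.v (∑ i, c i • b i)) (wL.v (c 0 • b 0)) with hmin | hmin
          · rw [min_eq_left hmin] at hvW
            linarith
          · rw [min_eq_right hmin] at hvW
            linarith
    refine ⟨C, parti, ?_⟩
    intro a ha
    set S : ℕ → L := fun n => ∑ i, a n i • b i with hSdef
    have hSsub : ∀ m n : ℕ, S m - S n = ∑ i, (a m i - a n i) • b i := by
      intro m n
      show (∑ i, a m i • b i) - (∑ i, a n i • b i) = _
      rw [← Finset.sum_sub_distrib]
      exact Finset.sum_congr rfl fun i _ => (sub_smul _ _ _).symm
    have hcCau : wK.Cau (fun n => a n 0) := by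
      intro N
      obtain ⟨M0, hM0⟩ := ha ((e : ℤ) * N + C)
      refine ⟨M0, fun m hm n hn => ?_⟩
      by_cases hceq : a m 0 = a n 0
      · exact Or.inl hceq
      right
      have hdne : a m 0 - a n 0 ≠ 0 := sub_ne_zero.mpr hceq
      have hv : (e : ℤ) * N + C ≤ wL.v (S m - S n) := by
        rcases hM0 m hm n hn with h | h
        · exfalso
          have hzero : ∑ i, (a m i - a n i) • b i = 0 := by
            rw [← hSsub m n, h, sub_self]
          have := Fintype.linearIndependent_iff.mp hb _ hzero 0
          exact hceq (sub_eq_zero.mp this)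
        · exact h
      have hub := parti (fun i => a m i - a n i) 0 hdne
      rw [← hSsub m n] at hub
      have he0 : (0 : ℤ) < (e : ℤ) := by exact_mod_cast he.1
      have hEN : (e : ℤ) * N ≤ (e : ℤ) * wK.v (a m 0 - a n 0) := by linarith
      exact le_of_mul_le_mul_left hEN he0
    obtain ⟨cinf, hcinf⟩ := wK.complete _ hcCau
    set R : ℕ → L := fun n => ∑ i, a n i.succ • Fin.tail b i with hRdef
    have hSR : ∀ n, S n = a n 0 • b 0 + R n := fun n => hsum (a n)
    have hRCau : wL.Cau R := by
      intro N
      set N2 : ℤ := max 0 (N - wL.v (b 0)) with hN2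
      obtain ⟨M1, hM1⟩ := ha N
      obtain ⟨M2, hM2⟩ := hcCau N2
      refine ⟨max M1 M2, fun m hm n hn => ?_⟩
      have hR : R m - R n = (S m - S n) - (a m 0 - a n 0) • b 0 := by
        rw [hSR m, hSR n, sub_smul]
        abel
      have h1 : S m - S n = 0 ∨ N ≤ wL.v (S m - S n) := by
        rcases hM1 m (le_trans (le_max_left _ _) hm) n (le_trans (le_max_left _ _) hn)
          with h | h
        · left; rw [sub_eq_zero]; exact h
        · right; exact h
      have h2 : (a m 0 - a n 0) • b 0 = 0 ∨ N ≤ wL.v ((a m 0 - a n 0) • b 0) := by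
        by_cases hceq : a m 0 = a n 0
        · left; rw [hceq, sub_self, zero_smul]
        · right
          have hdne : a m 0 - a n 0 ≠ 0 := sub_ne_zero.mpr hceq
          have h : N2 ≤ wK.v (a m 0 - a n 0) := by
            rcases hM2 m (le_trans (le_max_right _ _) hm) n
              (le_trans (le_max_right _ _) hn) with h' | h'
            · exact absurd h' hceq
            · exact h'
          rw [v_smul wK wL he hdne hb0ne]
          have he1 : (1 : ℤ) ≤ (e : ℤ) := by exact_mod_cast he.1
          have hN2nn : (0 : ℤ) ≤ N2 := le_max_left _ _
          have t1 : (e : ℤ) * N2 ≤ (e : ℤ) * wK.v (a m 0 - a n 0) :=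
            mul_le_mul_of_nonneg_left h (by positivity)
          have t2 : N2 ≤ (e : ℤ) * N2 := le_mul_of_one_le_left hN2nn he1
          have t3 : N - wL.v (b 0) ≤ N2 := le_max_right _ _
          linarith
      rcases wL.sub_cases h1 h2 with h | h
      · left
        rw [← hR] at h
        exact sub_eq_zero.mp h
      · right
        rwa [← hR] at h
    obtain ⟨d, hd⟩ := hC'2 (fun n i => a n i.succ) hRCau
    refine ⟨Fin.cons cinf d, ?_⟩
    have hX : ∑ i, (Fin.cons cinf d : Fin (k + 1) → K) i • b i
        = cinf • b 0 + ∑ i, d i • Fin.tail b i := by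
      rw [hsum]
      simp [Fin.cons_zero, Fin.cons_succ]
    intro N
    set N2 : ℤ := max 0 (N - wL.v (b 0)) with hN2
    obtain ⟨M1, hM1⟩ := hd N
    obtain ⟨M2, hM2⟩ := hcinf N2
    refine ⟨max M1 M2, fun n hn => ?_⟩
    have hdiff : S n - (∑ i, (Fin.cons cinf d : Fin (k + 1) → K) i • b i)
        = (a n 0 - cinf) • b 0 + (R n - ∑ i, d i • Fin.tail b i) := by
      rw [hX, hSR n, sub_smul]
      abel
    have h1 : (a n 0 - cinf) • b 0 = 0 ∨ N ≤ wL.v ((a n 0 - cinf) • b 0) := by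
      by_cases hceq : a n 0 = cinf
      · left; rw [hceq, sub_self, zero_smul]
      · right
        have hdne : a n 0 - cinf ≠ 0 := sub_ne_zero.mpr hceq
        have h : N2 ≤ wK.v (a n 0 - cinf) := by
          rcases hM2 n (le_trans (le_max_right _ _) hn) with h' | h'
          · exact absurd h' hceq
          · exact h'
        rw [v_smul wK wL he hdne hb0ne]
        have he1 : (1 : ℤ) ≤ (e : ℤ) := by exact_mod_cast he.1
        have hN2nn : (0 : ℤ) ≤ N2 := le_max_left _ _
        have t1 : (e : ℤ) * N2 ≤ (e : ℤ) * wK.v (a n 0 - cinf) :=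
          mul_le_mul_of_nonneg_left h (by positivity)
        have t2 : N2 ≤ (e : ℤ) * N2 := le_mul_of_one_le_left hN2nn he1
        have t3 : N - wL.v (b 0) ≤ N2 := le_max_right _ _
        linarith
    have h2 : (R n - ∑ i, d i • Fin.tail b i) = 0 ∨
        N ≤ wL.v (R n - ∑ i, d i • Fin.tail b i) := by
      rcases hM1 n (le_trans (le_max_left _ _) hn) with h | h
      · left; rw [sub_eq_zero]; exact h
      · right; exact h
    rcases wL.add_cases h1 h2 with h | h
    · left
      rw [← hdiff] at h
      exact sub_eq_zero.mp h
    · right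
      rwa [← hdiff] at h

end Tower

section Compare

variable {K L M : Type} [Field K] [Field L] [Field M]
  [Algebra K L] [Algebra L M] [Algebra K M] [IsScalarTower K L M]
  [FiniteDimensional K L]
variable (wK : LocalFieldStruct K) (wL : LocalFieldStruct L) (wM : LocalFieldStruct M)

theorem compare_bound {eL eM : ℕ} (heL : wK.IsRamificationIndex wL eL)
    (heM : wK.IsRamificationIndex wM eM) :
    ∃ C : ℤ, ∀ x : L, x ≠ 0 →
      (eM : ℤ) * wL.v x - C ≤ (eL : ℤ) * wM.v (algebraMap L M x) := by
  classical
  have hne : Nonempty (Fin (Module.finrank K L)) := by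
    rw [← Fin.pos_iff_nonempty]
    exact Module.finrank_pos
  set b := Module.finBasis K L with hb
  obtain ⟨CL, hCL, -⟩ := hard_lemma wK wL heL (Module.finrank K L) b b.linearIndependent
  set B : ℤ := Finset.univ.inf' (Finset.univ_nonempty) fun j => wM.v (algebraMap L M (b j))
    with hB
  refine ⟨(eM : ℤ) * CL - (eL : ℤ) * B, fun x hx => ?_⟩
  set c : Fin (Module.finrank K L) → K := fun j => b.repr x j with hc
  have hxsum : ∑ i, c i • b i = x := b.sum_repr x
  have hex : ∃ j, c j ≠ 0 := by
    by_contra hall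
    push_neg at hall
    apply hx
    rw [← hxsum]
    simp [hall]
  have hs : (Finset.univ.filter fun j => c j ≠ 0).Nonempty := by
    obtain ⟨j, hj⟩ := hex
    exact ⟨j, by simp [hj]⟩
  obtain ⟨j₀, hj₀s, hj₀min⟩ := Finset.exists_min_image _ (fun j => wK.v (c j)) hs
  have hj₀ : c j₀ ≠ 0 := (Finset.mem_filter.mp hj₀s).2
  have hup : wL.v x ≤ (eL : ℤ) * wK.v (c j₀) + CL := by
    rw [← hxsum]
    exact hCL c j₀ hj₀
  -- map everything to M
  set f := (IsScalarTower.toAlgHom K L M).toLinearMap with hf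
  have hfx : ∀ y : L, f y = algebraMap L M y := fun y => rfl
  have h179 : algebraMap L M x = ∑ i, c i • algebraMap L M (b i) := by
    rw [← hfx x, ← hxsum, map_sum]
    exact Finset.sum_congr rfl fun i _ => by rw [map_smul, hfx]
  have hterm : ∀ i ∈ Finset.univ, (c i • algebraMap L M (b i) = 0 ∨
      (eM : ℤ) * wK.v (c j₀) + B ≤ wM.v (c i • algebraMap L M (b i))) := by
    intro i _
    by_cases hci : c i = 0
    · left; rw [hci, zero_smul]
    · right
      have hbine : algebraMap L M (b i) ≠ 0 :=
        algebraMap_ne_zero' (b.ne_zero i)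
      rw [v_smul wK wM heM hci hbine]
      have h1 : wK.v (c j₀) ≤ wK.v (c i) := hj₀min i (by simp [hci])
      have h2 : B ≤ wM.v (algebraMap L M (b i)) := Finset.inf'_le _ (Finset.mem_univ i)
      have h3 : (eM : ℤ) * wK.v (c j₀) ≤ (eM : ℤ) * wK.v (c i) :=
        mul_le_mul_of_nonneg_left h1 (by positivity)
      linarith
  have hlow : (eM : ℤ) * wK.v (c j₀) + B ≤ wM.v (algebraMap L M x) := by
    rcases wM.sum_cases Finset.univ _ hterm with h | h
    · exfalso
      exact (algebraMap_ne_zero' (L := M) hx) (by rw [h179, h])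
    · rwa [← h179] at h
  have t1 : (eL : ℤ) * ((eM : ℤ) * wK.v (c j₀) + B) ≤ (eL : ℤ) * wM.v (algebraMap L M x) :=
    mul_le_mul_of_nonneg_left hlow (by positivity)
  have t2 : (eM : ℤ) * wL.v x ≤ (eM : ℤ) * ((eL : ℤ) * wK.v (c j₀) + CL) :=
    mul_le_mul_of_nonneg_left hup (by positivity)
  nlinarith [t1, t2]

theorem compare_eq {eL eM : ℕ} (heL : wK.IsRamificationIndex wL eL)
    (heM : wK.IsRamificationIndex wM eM) :
    ∀ x : L, x ≠ 0 → (eL : ℤ) * wM.v (algebraMap L M x) = (eM : ℤ) * wL.v x := by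
  obtain ⟨C, hC⟩ := compare_bound wK wL wM heL heM
  have hge : ∀ x : L, x ≠ 0 → (eM : ℤ) * wL.v x ≤ (eL : ℤ) * wM.v (algebraMap L M x) := by
    intro x hx
    by_contra hlt
    push_neg at hlt
    have hD0 : 0 < (eM : ℤ) * wL.v x - (eL : ℤ) * wM.v (algebraMap L M x) :=
      sub_pos.mpr hlt
    have hD1 : 1 ≤ (eM : ℤ) * wL.v x - (eL : ℤ) * wM.v (algebraMap L M x) := hD0
    have key : ∀ n : ℕ,
        (n : ℤ) * ((eM : ℤ) * wL.v x - (eL : ℤ) * wM.v (algebraMap L M x)) ≤ C := by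
      intro n
      have hxn : x ^ n ≠ 0 := pow_ne_zero _ hx
      have hh := hC (x ^ n) hxn
      rw [map_pow, wL.v_pow' hx n, wM.v_pow' (algebraMap_ne_zero' hx) n] at hh
      nlinarith [hh]
    have h1 := key (C.toNat + 1)
    have h2 : C ≤ (C.toNat : ℤ) := Int.self_le_toNat C
    have h3 : ((C.toNat + 1 : ℕ) : ℤ) ≤ ((C.toNat + 1 : ℕ) : ℤ) *
        ((eM : ℤ) * wL.v x - (eL : ℤ) * wM.v (algebraMap L M x)) :=
      le_mul_of_one_le_right (by positivity) hD1
    push_cast at h1 h3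
    linarith
  intro x hx
  have h1 := hge x hx
  have h2 := hge x⁻¹ (inv_ne_zero hx)
  rw [map_inv₀, wL.v_inv' hx, wM.v_inv' (algebraMap_ne_zero' hx)] at h2
  refine le_antisymm ?_ h1
  linarith

end Compare

end LocalFieldStruct

/-- `x` is a normal basis generator of `L` over `K`: the Galois conjugates of
`x` form a `K`-basis of `L`. -/
def IsNormalElement (K : Type) [Field K] {L : Type} [Field L] [Algebra K L]
    (x : L) : Prop :=
  LinearIndependent K (fun σ : L ≃ₐ[K] L => σ x) ∧
    Submodule.span K (Set.range fun σ : L ≃ₐ[K] L => σ x) = ⊤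

section NormalTraceSec

variable {K L M : Type} [Field K] [Field L] [Field M]
  [Algebra K L] [Algebra L M] [Algebra K M] [IsScalarTower K L M]

/-- Conjugation of an `L`-automorphism of `M` by a `K`-automorphism of `M`. -/
noncomputable def conjAut [Normal K L] [Normal K M] (σ : M ≃ₐ[K] M) (τ : M ≃ₐ[L] M) :
    M ≃ₐ[L] M :=
  AlgEquiv.ofRingEquiv (f := σ.symm.toRingEquiv.trans (τ.toRingEquiv.trans σ.toRingEquiv))
    (by
      intro l
      show σ (τ (σ.symm (algebraMap L M l))) = algebraMap L M l
      rw [← AlgEquiv.restrictNormal_commutes σ.symm L l]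
      rw [τ.commutes]
      rw [← AlgEquiv.restrictNormal_commutes σ L _]
      congr 1
      apply (algebraMap L M).injective
      rw [AlgEquiv.restrictNormal_commutes σ L _, AlgEquiv.restrictNormal_commutes σ.symm L l,
        AlgEquiv.apply_symm_apply])

lemma conjAut_apply [Normal K L] [Normal K M] (σ : M ≃ₐ[K] M) (τ : M ≃ₐ[L] M) (x : M) :
    conjAut (K := K) σ τ x = σ (τ (σ.symm x)) := rfl

lemma conjAut_bijective [Normal K L] [Normal K M] (σ : M ≃ₐ[K] M) :
    Function.Bijective (conjAut (K := K) (L := L) σ) := by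
  rw [Function.bijective_iff_has_inverse]
  refine ⟨conjAut (K := K) σ.symm, fun τ => ?_, fun τ => ?_⟩ <;>
  · ext x
    simp [conjAut_apply]

lemma trace_conj [FiniteDimensional K M] [IsGalois K M] [IsGalois K L]
    (σ : M ≃ₐ[K] M) (y : M) :
    (AlgEquiv.restrictNormalHom L σ) (Algebra.trace L M y) = Algebra.trace L M (σ y) := by
  haveI : FiniteDimensional L M := Module.Finite.right K L M
  haveI : IsGalois L M := IsGalois.tower_top_of_isGalois K L M
  apply (algebraMap L M).injective
  have h1 : algebraMap L M ((AlgEquiv.restrictNormalHom L σ) (Algebra.trace L M y))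
      = σ (algebraMap L M (Algebra.trace L M y)) :=
    AlgEquiv.restrictNormal_commutes σ L _
  rw [h1, trace_eq_sum_automorphisms, trace_eq_sum_automorphisms, map_sum]
  refine Fintype.sum_bijective (conjAut (K := K) σ) (conjAut_bijective (K := K) σ)
    _ _ fun τ => ?_
  rw [conjAut_apply]
  simp

theorem isNormal_trace [FiniteDimensional K M] [IsGalois K M] [IsGalois K L]
    (y : M) (hy : IsNormalElement K y) :
    IsNormalElement K (Algebra.trace L M y) := by
  haveI : FiniteDimensional L M := Module.Finite.right K L M
  haveI : FiniteDimensional K L := Module.Finite.left K L M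
  haveI : IsGalois L M := IsGalois.tower_top_of_isGalois K L M
  have hspan : Submodule.span K
      (Set.range fun σ : L ≃ₐ[K] L => σ (Algebra.trace L M y)) = ⊤ := by
    rw [eq_top_iff]
    set T : M →ₗ[K] L := (Algebra.trace L M).restrictScalars K with hT
    have hTapp : ∀ z : M, T z = Algebra.trace L M z := fun z => rfl
    have hTsurj : Function.Surjective T := fun z => Algebra.trace_surjective L M z
    intro z _
    obtain ⟨mz, hmz⟩ := hTsurj z
    have hmztop : mz ∈ Submodule.span K (Set.range fun σ : M ≃ₐ[K] M => σ y) := by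
      rw [hy.2]; trivial
    have hzmem : z ∈ Submodule.map T
        (Submodule.span K (Set.range fun σ : M ≃ₐ[K] M => σ y)) := ⟨mz, hmztop, hmz⟩
    rw [Submodule.map_span] at hzmem
    refine Submodule.span_mono ?_ hzmem
    rintro - ⟨-, ⟨σ, rfl⟩, rfl⟩
    refine ⟨AlgEquiv.restrictNormalHom L σ, ?_⟩
    show (AlgEquiv.restrictNormalHom L σ) (Algebra.trace L M y) = T (σ y)
    rw [trace_conj (K := K) σ y]
    exact (hTapp (σ y)).symm
  refine ⟨?_, hspan⟩
  exact linearIndependent_of_top_le_span_of_card_eq_finrank hspan.ge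
    (Fintype.card_eq_nat_card.trans (IsGalois.card_aut_eq_finrank K L))

end NormalTraceSec

/-- The valuation criterion `VC(L/K)`, for an extension with ramification
index `e` and different of valuation `d`: every nonzero `x ∈ L` with
`v_L(x) ≡ -d-1 (mod e)` is a normal basis generator of `L` over `K`. -/
def VC (K : Type) [Field K] {L : Type} [Field L] [Algebra K L]
    (wL : LocalFieldStruct L) (e : ℕ) (d : ℤ) : Prop :=
  ∀ x : L, x ≠ 0 → Int.ModEq (e : ℤ) (wL.v x) (-d - 1) → IsNormalElement K x

open LocalFieldStruct in
/-- **Corollary.** If `K ⊆ L ⊆ M` are finite extensions of local fields with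
`M` and `L` both Galois over `K`, then `VC(M/K)` implies `VC(L/K)`. -/
theorem statement6 {K L M : Type} [Field K] [Field L] [Field M]
    [Algebra K L] [Algebra L M] [Algebra K M] [IsScalarTower K L M]
    [FiniteDimensional K M] [IsGalois K M] [IsGalois K L]
    (wK : LocalFieldStruct K) (wL : LocalFieldStruct L) (wM : LocalFieldStruct M)
    (eMK : ℕ) (heMK : IsRamificationIndex wK wM eMK)
    (dMK : ℤ) (hdMK : IsDifferentVal wK wM dMK)
    (eLK : ℕ) (heLK : IsRamificationIndex wK wL eLK)
    (dLK : ℤ) (hdLK : IsDifferentVal wK wL dLK)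
    (h : VC K wM eMK dMK) :
    VC K wL eLK dLK := by
  haveI : FiniteDimensional K L := Module.Finite.left K L M
  haveI : FiniteDimensional L M := Module.Finite.right K L M
  intro x hx hmod
  have hcmp := compare_eq wK wL wM heLK heMK
  have heL0 : (0 : ℤ) < (eLK : ℤ) := by exact_mod_cast heLK.1
  have heM0 : (0 : ℤ) < (eMK : ℤ) := by exact_mod_cast heMK.1
  -- extract an element w₀ of valuation exactly -dMK - 1 with non-integral trace
  have hnotall : ¬ (∀ z : M, (z ≠ 0 → -dMK - 1 ≤ wM.v z) →
      wK.Integral (Algebra.trace K M z)) := by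
    intro H
    have := (hdMK (-dMK - 1)).mp H
    omega
  push_neg at hnotall
  obtain ⟨w₀, hw₀v, hw₀ni⟩ := hnotall
  have htr0 : Algebra.trace K M w₀ ≠ 0 := fun h' => hw₀ni (Or.inl h')
  have hw₀ne : w₀ ≠ 0 := by
    rintro rfl
    exact htr0 (map_zero _)
  have hw₀low : -dMK - 1 ≤ wM.v w₀ := hw₀v hw₀ne
  have hP3 : ∀ z : M, (z ≠ 0 → -dMK ≤ wM.v z) → wK.Integral (Algebra.trace K M z) :=
    (hdMK (-dMK)).mpr le_rfl
  have hw₀up : wM.v w₀ ≤ -dMK - 1 := by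
    by_contra hgt
    push_neg at hgt
    exact hw₀ni (hP3 w₀ (fun _ => by omega))
  have hw₀v' : wM.v w₀ = -dMK - 1 := le_antisymm hw₀up hw₀low
  set t₀ := Algebra.trace L M w₀ with ht₀
  have htrtr : Algebra.trace K L t₀ = Algebra.trace K M w₀ := Algebra.trace_trace w₀
  have ht₀ne : t₀ ≠ 0 := by
    intro h'
    apply htr0
    rw [← htrtr, h', map_zero]
  have ht₀up : wL.v t₀ ≤ -dLK - 1 := by
    by_contra hgt
    push_neg at hgt
    have hint := (hdLK (-dLK)).mpr le_rfl t₀ (fun _ => by omega)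
    rw [htrtr] at hint
    exact hw₀ni hint
  -- the key lower bound on the valuation of t₀ (Lemma C)
  have ht₀low : -dLK - 1 ≤ wL.v t₀ := by
    have hLHS : ∀ s : L, (s ≠ 0 → wL.v t₀ + 1 ≤ wL.v s) →
        wK.Integral (Algebra.trace K L s) := by
      intro s hs
      by_cases hs0 : s = 0
      · subst hs0
        rw [map_zero]
        exact Or.inl rfl
      have hvs := hs hs0
      have hlne : s * t₀⁻¹ ≠ 0 := mul_ne_zero hs0 (inv_ne_zero ht₀ne)
      have hvl : wL.v (s * t₀⁻¹) = wL.v s - wL.v t₀ := by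
        rw [wL.v_mul _ _ hs0 (inv_ne_zero ht₀ne), wL.v_inv' ht₀ne]
        ring
      have hvl1 : 1 ≤ wL.v (s * t₀⁻¹) := by omega
      have hvMl : 1 ≤ wM.v (algebraMap L M (s * t₀⁻¹)) := by
        have hcm := hcmp (s * t₀⁻¹) hlne
        by_contra hno
        push_neg at hno
        have h1 : (eLK : ℤ) * wM.v (algebraMap L M (s * t₀⁻¹)) ≤ 0 :=
          mul_nonpos_of_nonneg_of_nonpos heL0.le (by omega)
        have h2 : (eMK : ℤ) * 1 ≤ (eMK : ℤ) * wL.v (s * t₀⁻¹) :=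
          mul_le_mul_of_nonneg_left hvl1 heM0.le
        linarith
      have hzmul : algebraMap L M (s * t₀⁻¹) ≠ 0 := algebraMap_ne_zero' hlne
      have hvz : wM.v (algebraMap L M (s * t₀⁻¹) * w₀)
          = wM.v (algebraMap L M (s * t₀⁻¹)) + wM.v w₀ := wM.v_mul _ _ hzmul hw₀ne
      have hint := hP3 (algebraMap L M (s * t₀⁻¹) * w₀) (fun _ => by omega)
      have htr : Algebra.trace K M (algebraMap L M (s * t₀⁻¹) * w₀)
          = Algebra.trace K L s := by
        rw [← Algebra.trace_trace (S := L) (algebraMap L M (s * t₀⁻¹) * w₀),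
          ← Algebra.smul_def, map_smul]
        congr 1
        rw [smul_eq_mul]
        field_simp
        exact ht₀.symm
      rw [htr] at hint
      exact hint
    have := (hdLK (wL.v t₀ + 1)).mp hLHS
    omega
  have ht₀v : wL.v t₀ = -dLK - 1 := le_antisymm ht₀up ht₀low
  -- main construction
  have hlne : x * t₀⁻¹ ≠ 0 := mul_ne_zero hx (inv_ne_zero ht₀ne)
  have hvl : wL.v (x * t₀⁻¹) = wL.v x - wL.v t₀ := by
    rw [wL.v_mul _ _ hx (inv_ne_zero ht₀ne), wL.v_inv' ht₀ne]
    ring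
  obtain ⟨k, hk⟩ : ∃ k : ℤ, wL.v (x * t₀⁻¹) = (eLK : ℤ) * k := by
    obtain ⟨k₀, hk₀⟩ := hmod.dvd
    refine ⟨-k₀, ?_⟩
    rw [hvl, ht₀v]
    linear_combination -hk₀
  have hyne : algebraMap L M (x * t₀⁻¹) * w₀ ≠ 0 :=
    mul_ne_zero (algebraMap_ne_zero' hlne) hw₀ne
  have hvMl : wM.v (algebraMap L M (x * t₀⁻¹)) = (eMK : ℤ) * k := by
    have hcm := hcmp (x * t₀⁻¹) hlne
    rw [hk] at hcm
    have h2 : (eLK : ℤ) * wM.v (algebraMap L M (x * t₀⁻¹))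
        = (eLK : ℤ) * ((eMK : ℤ) * k) := by linarith [hcm]
    exact mul_left_cancel₀ heL0.ne' h2
  have hvy : wM.v (algebraMap L M (x * t₀⁻¹) * w₀) = (eMK : ℤ) * k + (-dMK - 1) := by
    rw [wM.v_mul _ _ (algebraMap_ne_zero' hlne) hw₀ne, hvMl, hw₀v']
  have hymod : Int.ModEq (eMK : ℤ) (wM.v (algebraMap L M (x * t₀⁻¹) * w₀)) (-dMK - 1) := by
    rw [hvy]
    exact Int.modEq_iff_dvd.mpr ⟨-k, by ring⟩
  have hynorm := h _ hyne hymod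
  have htry : Algebra.trace L M (algebraMap L M (x * t₀⁻¹) * w₀) = x := by
    rw [← Algebra.smul_def, map_smul, smul_eq_mul]
    field_simp
    exact ht₀.symm
  have hres := isNormal_trace (K := K) (L := L) _ hynorm
  rwa [htry] at hres
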